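/- Let A be a commutative ring, p ∈ A, and f, u_0, v_0 ∈ A/pA[x] monic with f ≡ u_0 v_0 mod p and u_0, v_0 comaximal mod p (∃ s,t: s u_0 + t v_0 = 1). Then by induction, for each k ≥ 1 there exist monic lifts u_k, v_k ∈ A/p^k A[x] of u_0, v_0 with f ≡ u_k v_k mod p^k, and such lifts are unique modulo p^k. -/

import Mathlib

namespace HenselAux

open Polynomial

variable {A : Type*} [CommRing A]

lemma mem_span_iff_map_eq_zero (a : A) (g : A[X]) :
    g ∈ Ideal.span {C a} ↔ g.map (Ideal.Quotient.mk (Ideal.span {a})) = 0 := by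
  rw [Ideal.mem_span_singleton, C_dvd_iff_dvd_coeff, Polynomial.ext_iff]
  simp only [coeff_map, coeff_zero, Ideal.Quotient.eq_zero_iff_mem, Ideal.mem_span_singleton]

lemma degree_eq_of_sub_mem {p : A} (hp : ¬ IsUnit p) {u w : A[X]} (hu : u.Monic) (hw : w.Monic)
    (h : u - w ∈ Ideal.span {C p}) : u.degree = w.degree := by
  have hA : Nontrivial A := by
    by_contra hA
    rw [not_nontrivial_iff_subsingleton] at hA
    exact hp (isUnit_of_subsingleton p)
  have key : ∀ x y : A[X], x.Monic → y.Monic → x - y ∈ Ideal.span {C p} →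
      x.natDegree ≤ y.natDegree := by
    intro x y hx hy hxy
    by_contra hlt
    push_neg at hlt
    have hco : p ∣ (x - y).coeff x.natDegree := by
      have := (C_dvd_iff_dvd_coeff p (x - y)).mp (Ideal.mem_span_singleton.mp hxy)
      exact this x.natDegree
    rw [coeff_sub, hx.coeff_natDegree, coeff_eq_zero_of_natDegree_lt hlt, sub_zero] at hco
    exact hp (isUnit_of_dvd_one hco)
  have h2 : w - u ∈ Ideal.span {C p} := by
    have := (Ideal.span {C (R := A) p}).neg_mem h
    rwa [neg_sub] at this
  have hnd : u.natDegree = w.natDegree := le_antisymm (key u w hu hw h) (key w u hw hu h2)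
  rw [degree_eq_natDegree hu.ne_zero, degree_eq_natDegree hw.ne_zero, hnd]

lemma bezout_solve {B : Type*} [CommRing B] [Nontrivial B] (U V S T c : B[X])
    (hU : U.Monic) (hV : V.Monic) (hST : S * U + T * V = 1)
    (hc : c.degree < U.degree + V.degree) :
    ∃ a b : B[X], U * b + V * a = c ∧ a.degree < U.degree ∧ b.degree < V.degree := by
  refine ⟨(T * c) %ₘ U, S * c + ((T * c) /ₘ U) * V, ?_, degree_modByMonic_lt _ hU, ?_⟩
  · have h := modByMonic_add_div (T * c) U
    linear_combination c * hST + V * h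
  · have heq : U * (S * c + ((T * c) /ₘ U) * V) = c - V * ((T * c) %ₘ U) := by
      have h := modByMonic_add_div (T * c) U
      linear_combination c * hST + V * h
    by_cases hb : S * c + ((T * c) /ₘ U) * V = 0
    · rw [hb, degree_zero]
      exact bot_lt_iff_ne_bot.mpr (fun h => hV.ne_zero (degree_eq_bot.mp h))
    · have hUne : U.degree ≠ ⊥ := fun h => hU.ne_zero (degree_eq_bot.mp h)
      have hVne : V.degree ≠ ⊥ := fun h => hV.ne_zero (degree_eq_bot.mp h)
      have h1 : ((S * c + ((T * c) /ₘ U) * V) * U).degree < V.degree + U.degree := by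
        rw [mul_comm, heq]
        have hd1 : (V * ((T * c) %ₘ U)).degree < V.degree + U.degree :=
          lt_of_le_of_lt (degree_mul_le _ _)
            (WithBot.add_lt_add_left hVne (degree_modByMonic_lt _ hU))
        have hd2 : c.degree < V.degree + U.degree := by rwa [add_comm] at hc
        exact lt_of_le_of_lt (degree_sub_le _ _) (max_lt hd2 hd1)
      rw [hU.degree_mul] at h1
      exact (WithBot.add_lt_add_iff_right hUne).mp h1

lemma step {R : Type*} [CommRing R] [Nontrivial R] {q : R} (hq : IsNilpotent q)
    {u v s t δ ε : R[X]} (hu : u.Monic) (hv : v.Monic) (hst : s * u + t * v = 1)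
    (hrel : u * ε + v * δ + δ * ε = 0)
    (hdδ : δ.degree < u.degree) (hdε : ε.degree < v.degree)
    (j : ℕ) (h1 : C (q ^ j) ∣ δ) (h2 : C (q ^ j) ∣ ε) (hj : 1 ≤ j) :
    C (q ^ (j + 1)) ∣ δ ∧ C (q ^ (j + 1)) ∣ ε := by
  have hprod : C (q ^ (j + 1)) ∣ δ * ε := by
    refine dvd_trans ?_ (mul_dvd_mul h1 h2)
    rw [← C_mul, ← pow_add]
    exact map_dvd C (pow_dvd_pow q (by omega))
  have hδ_eq : δ = u * (s * δ - t * ε) - t * (δ * ε) := by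
    linear_combination (-δ) * hst + t * hrel
  have hε_eq : ε = v * (t * ε - s * δ) - s * (δ * ε) := by
    linear_combination (-ε) * hst + s * hrel
  have hgd : C (q ^ (j + 1)) ∣ (s * δ - t * ε) := by
    have hItop : Ideal.span {q ^ (j + 1)} ≠ ⊤ := by
      rw [Ne, Ideal.span_singleton_eq_top]
      intro hun
      obtain ⟨m, hm⟩ := hq
      have : IsUnit q := (isUnit_pow_iff (Nat.succ_ne_zero j)).mp hun
      have : IsUnit (q ^ m) := this.pow m
      rw [hm, isUnit_zero_iff] at this
      exact one_ne_zero this.symm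
    haveI : Nontrivial (R ⧸ Ideal.span {q ^ (j + 1)}) := Ideal.Quotient.nontrivial_iff.mpr hItop
    set ψ := Ideal.Quotient.mk (Ideal.span {q ^ (j + 1)}) with hψ
    rw [← Ideal.mem_span_singleton, mem_span_iff_map_eq_zero]
    by_contra hg0
    have hmapδ : δ.map ψ = u.map ψ * (s * δ - t * ε).map ψ := by
      have hz : (t * (δ * ε)).map ψ = 0 := by
        rw [← mem_span_iff_map_eq_zero, Ideal.mem_span_singleton]
        exact hprod.mul_left t
      conv_lhs => rw [hδ_eq]
      rw [Polynomial.map_sub, Polynomial.map_mul, hz, sub_zero]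
    have hddeg : (δ.map ψ).degree < (u.map ψ).degree := by
      rw [hu.degree_map ψ]
      exact lt_of_le_of_lt degree_map_le hdδ
    rw [hmapδ, mul_comm, (hu.map ψ).degree_mul] at hddeg
    have : (u.map ψ).degree ≤ ((s * δ - t * ε).map ψ).degree + (u.map ψ).degree := by
      calc (u.map ψ).degree = 0 + (u.map ψ).degree := (zero_add _).symm
        _ ≤ _ := add_le_add_left (zero_le_degree_iff.mpr hg0) _
    exact absurd hddeg (not_lt.mpr this)
  constructor
  · rw [hδ_eq]
    exact dvd_sub (hgd.mul_left u) (hprod.mul_left t)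
  · rw [hε_eq]
    have : C (q ^ (j + 1)) ∣ (t * ε - s * δ) := by
      have := hgd.neg_right
      rwa [neg_sub] at this
    exact dvd_sub (this.mul_left v) (hprod.mul_left s)

lemma uniq (p : A) (hp : ¬ IsUnit p) (k : ℕ) (hk : 1 ≤ k)
    (u v u' v' : A[X]) (hu : u.Monic) (hv : v.Monic) (hu' : u'.Monic) (hv' : v'.Monic)
    (hdu : u'.degree = u.degree) (hdv : v'.degree = v.degree)
    (hcom : ∃ s t : A[X], s * u + t * v - 1 ∈ Ideal.span {C p})
    (hmul : u * v - u' * v' ∈ Ideal.span {C (p ^ k)})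
    (hcu : u' - u ∈ Ideal.span {C p}) (hcv : v' - v ∈ Ideal.span {C p}) :
    u - u' ∈ Ideal.span {C (p ^ k)} ∧ v - v' ∈ Ideal.span {C (p ^ k)} := by
  have hpk : ¬ IsUnit (p ^ k) := fun h => hp ((isUnit_pow_iff (by omega : k ≠ 0)).mp h)
  have hItop : Ideal.span {p ^ k} ≠ ⊤ := by rwa [Ne, Ideal.span_singleton_eq_top]
  haveI : Nontrivial (A ⧸ Ideal.span {p ^ k}) := Ideal.Quotient.nontrivial_iff.mpr hItop
  set π := Ideal.Quotient.mk (Ideal.span {p ^ k}) with hπ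
  set q : A ⧸ Ideal.span {p ^ k} := π p with hqdef
  have hqk : q ^ k = 0 := by
    rw [hqdef, ← map_pow]
    exact Ideal.Quotient.eq_zero_iff_mem.mpr (Ideal.subset_span rfl)
  have hqnil : IsNilpotent q := ⟨k, hqk⟩
  -- mapping memberships of span {C p}
  have hmapdvd : ∀ g : A[X], g ∈ Ideal.span {C p} → C q ∣ g.map π := by
    intro g hg
    obtain ⟨h, hh⟩ := Ideal.mem_span_singleton.mp hg
    exact ⟨h.map π, by rw [hh, Polynomial.map_mul, map_C]⟩
  set δ : (A ⧸ Ideal.span {p ^ k})[X] := u'.map π - u.map π with hδdef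
  set ε : (A ⧸ Ideal.span {p ^ k})[X] := v'.map π - v.map π with hεdef
  have hUV : u.map π * v.map π = u'.map π * v'.map π := by
    have h0 := (mem_span_iff_map_eq_zero (p ^ k) _).mp hmul
    rw [Polynomial.map_sub, Polynomial.map_mul, Polynomial.map_mul, sub_eq_zero] at h0
    exact h0
  have hrel : u.map π * ε + v.map π * δ + δ * ε = 0 := by
    rw [hδdef, hεdef]; linear_combination -hUV
  -- comaximality in the quotient
  obtain ⟨s, t, hst⟩ := hcom
  obtain ⟨e, he⟩ := Ideal.mem_span_singleton.mp hst
  have h1 : (s.map π) * (u.map π) + (t.map π) * (v.map π) = 1 + C q * e.map π := by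
    have := congrArg (Polynomial.map π) he
    rw [Polynomial.map_sub, Polynomial.map_add, Polynomial.map_mul, Polynomial.map_mul,
      Polynomial.map_one, Polynomial.map_mul, map_C, sub_eq_iff_eq_add] at this
    rw [this]; ring
  have hωnil : IsNilpotent (C q * e.map π) := by
    refine ⟨k, ?_⟩
    rw [mul_pow, ← C_pow, hqk, map_zero, zero_mul]
  have hunit : IsUnit (1 + C q * e.map π) := hωnil.isUnit_one_add
  obtain ⟨w, hw⟩ := hunit
  have hρ : (↑w⁻¹ : (A ⧸ Ideal.span {p ^ k})[X]) * (1 + C q * e.map π) = 1 := by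
    rw [← hw]; exact w.inv_mul
  have hST : (↑w⁻¹ * s.map π) * (u.map π) + (↑w⁻¹ * t.map π) * (v.map π) = 1 := by
    linear_combination (↑w⁻¹ : (A ⧸ Ideal.span {p ^ k})[X]) * h1 + hρ
  -- degrees
  have hdδ : δ.degree < (u.map π).degree := by
    rw [hδdef, hu.degree_map π]
    refine lt_of_lt_of_le (degree_sub_lt ?_ (hu'.map π).ne_zero ?_) ?_
    · rw [hu'.degree_map, hu.degree_map, hdu]
    · rw [(hu'.map π).leadingCoeff, (hu.map π).leadingCoeff]
    · rw [hu'.degree_map, hdu]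
  have hdε : ε.degree < (v.map π).degree := by
    rw [hεdef, hv.degree_map π]
    refine lt_of_lt_of_le (degree_sub_lt ?_ (hv'.map π).ne_zero ?_) ?_
    · rw [hv'.degree_map, hv.degree_map, hdv]
    · rw [(hv'.map π).leadingCoeff, (hv.map π).leadingCoeff]
    · rw [hv'.degree_map, hdv]
  -- initial divisibility
  have hδ1 : C (q ^ 1) ∣ δ := by
    rw [pow_one, hδdef, ← Polynomial.map_sub]
    exact hmapdvd _ hcu
  have hε1 : C (q ^ 1) ∣ ε := by
    rw [pow_one, hεdef, ← Polynomial.map_sub]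
    exact hmapdvd _ hcv
  have H : ∀ j : ℕ, 1 ≤ j → C (q ^ j) ∣ δ ∧ C (q ^ j) ∣ ε := by
    intro j hj
    induction j, hj using Nat.le_induction with
    | base => exact ⟨hδ1, hε1⟩
    | succ n hn ih =>
        exact step hqnil (hu.map π) (hv.map π) hST hrel hdδ hdε n ih.1 ih.2 hn
  obtain ⟨hδk, hεk⟩ := H k hk
  rw [hqk, map_zero, zero_dvd_iff] at hδk hεk
  constructor
  · have : u' - u ∈ Ideal.span {C (p ^ k)} := by
      rw [mem_span_iff_map_eq_zero, Polynomial.map_sub, ← hδdef, hδk]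
    have h2 := (Ideal.span {C (p ^ k)}).neg_mem this
    rwa [neg_sub] at h2
  · have : v' - v ∈ Ideal.span {C (p ^ k)} := by
      rw [mem_span_iff_map_eq_zero, Polynomial.map_sub, ← hεdef, hεk]
    have h2 := (Ideal.span {C (p ^ k)}).neg_mem this
    rwa [neg_sub] at h2

lemma exists_lift (p : A) (f u₀ v₀ : Polynomial A) (hp : ¬ IsUnit p)
    (hf : f.Monic) (hu₀ : u₀.Monic) (hv₀ : v₀.Monic)
    (hfac : f - u₀ * v₀ ∈ Ideal.span {Polynomial.C p})
    (hcop : ∃ s t : Polynomial A, s * u₀ + t * v₀ - 1 ∈ Ideal.span {Polynomial.C p}) :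
    ∀ k : ℕ, 1 ≤ k → ∃ u v : Polynomial A, u.Monic ∧ v.Monic ∧
      f - u * v ∈ Ideal.span {Polynomial.C (p ^ k)} ∧
      u - u₀ ∈ Ideal.span {Polynomial.C p} ∧ v - v₀ ∈ Ideal.span {Polynomial.C p} := by
  have hA : Nontrivial A := by
    by_contra hA
    rw [not_nontrivial_iff_subsingleton] at hA
    exact hp (isUnit_of_subsingleton p)
  have hptop : Ideal.span {p} ≠ ⊤ := by rwa [Ne, Ideal.span_singleton_eq_top]
  haveI hB : Nontrivial (A ⧸ Ideal.span {p}) := Ideal.Quotient.nontrivial_iff.mpr hptop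
  set π := Ideal.Quotient.mk (Ideal.span {p}) with hπ
  have degf : f.degree = u₀.degree + v₀.degree := by
    rw [degree_eq_of_sub_mem hp hf (hu₀.mul hv₀) hfac, hv₀.degree_mul]
  obtain ⟨s, t, hst⟩ := hcop
  have hST : (s.map π) * (u₀.map π) + (t.map π) * (v₀.map π) = 1 := by
    have h0 := (mem_span_iff_map_eq_zero p _).mp hst
    rw [Polynomial.map_sub, Polynomial.map_add, Polynomial.map_mul, Polynomial.map_mul,
      Polynomial.map_one, sub_eq_zero] at h0
    exact h0
  intro k hk
  induction k, hk using Nat.le_induction with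
  | base =>
      refine ⟨u₀, v₀, hu₀, hv₀, by rwa [pow_one], ?_, ?_⟩ <;>
        · rw [sub_self]; exact Ideal.zero_mem _
  | succ k hk ih =>
      obtain ⟨u, v, hu, hv, hfk, hu0, hv0⟩ := ih
      have hdu : u.degree = u₀.degree := degree_eq_of_sub_mem hp hu hu₀ hu0
      have hdv : v.degree = v₀.degree := degree_eq_of_sub_mem hp hv hv₀ hv0
      obtain ⟨w, hw⟩ := Ideal.mem_span_singleton.mp hfk
      set n := f.natDegree with hn
      set c : A[X] := ∑ i ∈ Finset.range n, monomial i (w.coeff i) with hc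
      have hc_coeff : ∀ j, c.coeff j = if j ∈ Finset.range n then w.coeff j else 0 := by
        intro j
        rw [hc, finset_sum_coeff]
        simp only [coeff_monomial]
        exact Finset.sum_ite_eq' (Finset.range n) j fun i => w.coeff i
      have hfuv_deg : (f - u * v).degree < f.degree := by
        refine degree_sub_lt ?_ hf.ne_zero ?_
        · rw [degf, hv.degree_mul, hdu, hdv]
        · rw [hf.leadingCoeff, (hu.mul hv).leadingCoeff]
      have hck : C (p ^ k) * c = f - u * v := by
        ext j
        rw [coeff_C_mul, hc_coeff]
        split_ifs with h
        · rw [hw, coeff_C_mul]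
        · rw [mul_zero]
          refine (coeff_eq_zero_of_degree_lt ?_).symm
          refine lt_of_lt_of_le hfuv_deg ?_
          rw [degree_eq_natDegree hf.ne_zero]
          exact_mod_cast Nat.cast_le.mpr (le_of_not_gt (by simpa using h) : n ≤ j)
      have hcdeg : c.degree < u₀.degree + v₀.degree := by
        rw [← degf, degree_eq_natDegree hf.ne_zero]
        rw [degree_lt_iff_coeff_zero]
        intro m hm
        rw [hc_coeff]
        simp only [Finset.mem_range, ite_eq_right_iff]
        intro hmn
        have hm' : n ≤ m := hm
        omega
      obtain ⟨a', b', heq, hda', hdb'⟩ := bezout_solve (u₀.map π) (v₀.map π) (s.map π)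
        (t.map π) (c.map π) (hu₀.map π) (hv₀.map π) hST
        (by rw [hu₀.degree_map, hv₀.degree_map]; exact lt_of_le_of_lt degree_map_le hcdeg)
      obtain ⟨a, haa, hdeg_a⟩ := Polynomial.mem_lifts_and_degree_eq
        (show a' ∈ lifts π from (lifts_iff_coeff_lifts a').mpr
          fun n => Ideal.Quotient.mk_surjective _)
      obtain ⟨b, hbb, hdeg_b⟩ := Polynomial.mem_lifts_and_degree_eq
        (show b' ∈ lifts π from (lifts_iff_coeff_lifts b').mpr
          fun n => Ideal.Quotient.mk_surjective _)
      have hda : a.degree < u₀.degree := by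
        rw [hdeg_a]; rwa [hu₀.degree_map] at hda'
      have hdb : b.degree < v₀.degree := by
        rw [hdeg_b]; rwa [hv₀.degree_map] at hdb'
      -- key congruence: c - u*b - v*a ∈ (C p)
      have hmapu : u.map π = u₀.map π := by
        have := (mem_span_iff_map_eq_zero p _).mp hu0
        rwa [Polynomial.map_sub, sub_eq_zero] at this
      have hmapv : v.map π = v₀.map π := by
        have := (mem_span_iff_map_eq_zero p _).mp hv0
        rwa [Polynomial.map_sub, sub_eq_zero] at this
      have hcbva : c - u * b - v * a ∈ Ideal.span {C p} := by
        rw [mem_span_iff_map_eq_zero]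
        rw [Polynomial.map_sub, Polynomial.map_sub, Polynomial.map_mul, Polynomial.map_mul,
          hmapu, hmapv, haa, hbb, ← hπ]
        rw [sub_sub, ← heq]
        rw [sub_self]
      have hCpk_a : degree (C (p ^ k) * a) < u.degree := by
        refine lt_of_le_of_lt ?_ (by rwa [hdu])
        calc degree (C (p ^ k) * a) ≤ degree (C (p ^ k)) + a.degree := degree_mul_le _ _
          _ ≤ 0 + a.degree := add_le_add_left degree_C_le _
          _ = a.degree := zero_add _
      have hCpk_b : degree (C (p ^ k) * b) < v.degree := by
        refine lt_of_le_of_lt ?_ (by rwa [hdv])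
        calc degree (C (p ^ k) * b) ≤ degree (C (p ^ k)) + b.degree := degree_mul_le _ _
          _ ≤ 0 + b.degree := add_le_add_left degree_C_le _
          _ = b.degree := zero_add _
      refine ⟨u + C (p ^ k) * a, v + C (p ^ k) * b, hu.add_of_left hCpk_a,
        hv.add_of_left hCpk_b, ?_, ?_, ?_⟩
      · have key : f - (u + C (p ^ k) * a) * (v + C (p ^ k) * b) =
            C (p ^ k) * (c - u * b - v * a) - C (p ^ k) * C (p ^ k) * (a * b) := by
          linear_combination -hck
        rw [key]
        refine sub_mem ?_ ?_
        · obtain ⟨e, he⟩ := Ideal.mem_span_singleton.mp hcbva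
          rw [he, Ideal.mem_span_singleton]
          exact ⟨e, by rw [← mul_assoc, ← C_mul, ← pow_succ]⟩
        · rw [Ideal.mem_span_singleton]
          refine Dvd.dvd.mul_right ?_ (a * b)
          rw [← C_mul, ← pow_add]
          exact map_dvd C (pow_dvd_pow p (by omega))
      · have h2 : u + C (p ^ k) * a - u₀ = (u - u₀) + C (p ^ k) * a := by ring
        rw [h2]
        refine add_mem hu0 (Ideal.mem_span_singleton.mpr ?_)
        exact (map_dvd C (dvd_pow_self p (by omega : k ≠ 0))).mul_right a
      · have h2 : v + C (p ^ k) * b - v₀ = (v - v₀) + C (p ^ k) * b := by ring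
        rw [h2]
        refine add_mem hv0 (Ideal.mem_span_singleton.mpr ?_)
        exact (map_dvd C (dvd_pow_self p (by omega : k ≠ 0))).mul_right b

end HenselAux

/-- Abstract Hensel's lemma over a commutative ring `A` with respect to a principal ideal `(p)`:
a factorization `f ≡ u₀v₀ (mod p)` of a monic `f` into monic comaximal factors lifts, for each
`k ≥ 1`, to a factorization `f ≡ u_k v_k (mod p^k)` into monic factors, uniquely modulo `p^k`. -/
theorem hensel_lemma_principal {A : Type*} [CommRing A] (p : A) (f u₀ v₀ : Polynomial A)
    (hf : f.Monic) (hu₀ : u₀.Monic) (hv₀ : v₀.Monic)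
    (hfac : f - u₀ * v₀ ∈ Ideal.span {Polynomial.C p})
    (hcop : ∃ s t : Polynomial A, s * u₀ + t * v₀ - 1 ∈ Ideal.span {Polynomial.C p}) :
    ∀ k : ℕ, 1 ≤ k → ∃ u v : Polynomial A, u.Monic ∧ v.Monic ∧
      f - u * v ∈ Ideal.span {Polynomial.C (p ^ k)} ∧
      u - u₀ ∈ Ideal.span {Polynomial.C p} ∧ v - v₀ ∈ Ideal.span {Polynomial.C p} ∧
      ∀ u' v' : Polynomial A, u'.Monic → v'.Monic →
        f - u' * v' ∈ Ideal.span {Polynomial.C (p ^ k)} →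
        u' - u₀ ∈ Ideal.span {Polynomial.C p} → v' - v₀ ∈ Ideal.span {Polynomial.C p} →
        u - u' ∈ Ideal.span {Polynomial.C (p ^ k)} ∧
        v - v' ∈ Ideal.span {Polynomial.C (p ^ k)} := by
  intro k hk
  by_cases hp : IsUnit p
  · have htop : Ideal.span {Polynomial.C (p ^ k)} = (⊤ : Ideal (Polynomial A)) :=
      Ideal.span_singleton_eq_top.mpr ((hp.pow k).map Polynomial.C)
    refine ⟨u₀, v₀, hu₀, hv₀, by rw [htop]; exact Submodule.mem_top, ?_, ?_, ?_⟩
    · rw [sub_self]; exact Ideal.zero_mem _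
    · rw [sub_self]; exact Ideal.zero_mem _
    · intro u' v' _ _ _ _ _
      rw [htop]
      exact ⟨Submodule.mem_top, Submodule.mem_top⟩
  · obtain ⟨u, v, hu, hv, hfk, hu0, hv0⟩ :=
      HenselAux.exists_lift p f u₀ v₀ hp hf hu₀ hv₀ hfac hcop k hk
    refine ⟨u, v, hu, hv, hfk, hu0, hv0, ?_⟩
    intro u' v' hu' hv' hf' hu0' hv0'
    obtain ⟨s, t, hst⟩ := hcop
    refine HenselAux.uniq p hp k hk u v u' v' hu hv hu' hv' ?_ ?_ ⟨s, t, ?_⟩ ?_ ?_ ?_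
    · rw [HenselAux.degree_eq_of_sub_mem hp hu' hu₀ hu0',
        HenselAux.degree_eq_of_sub_mem hp hu hu₀ hu0]
    · rw [HenselAux.degree_eq_of_sub_mem hp hv' hv₀ hv0',
        HenselAux.degree_eq_of_sub_mem hp hv hv₀ hv0]
    · have heq : s * u + t * v - 1 =
          (s * u₀ + t * v₀ - 1) + (s * (u - u₀) + t * (v - v₀)) := by ring
      rw [heq]
      exact add_mem hst (add_mem (Ideal.mul_mem_left _ s hu0) (Ideal.mul_mem_left _ t hv0))
    · have heq : u * v - u' * v' = (f - u' * v') - (f - u * v) := by ring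
      rw [heq]
      exact sub_mem hf' hfk
    · have heq : u' - u = (u' - u₀) - (u - u₀) := by ring
      rw [heq]
      exact sub_mem hu0' hu0
    · have heq : v' - v = (v' - v₀) - (v - v₀) := by ring
      rw [heq]
      exact sub_mem hv0' hv0
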